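/- For every u ∈ ℝ, P(Σ_i λ_i t_i² > u) ≤ exp(−c u) · Π_i (1 − 2cλ_i)^{−1/2}. -/

import Mathlib

open MeasureTheory ProbabilityTheory Real Filter
open scoped ENNReal NNReal


lemma aux_withDensity :
    gaussianReal 0 1 = volume.withDensity
      (fun x => ((Real.toNNReal (gaussianPDFReal 0 1 x) : ℝ≥0) : ℝ≥0∞)) := by
  rw [gaussianReal_of_var_ne_zero _ one_ne_zero]
  rfl

lemma aux_pdf_smul {b : ℝ} (x : ℝ) :
    (Real.toNNReal (gaussianPDFReal 0 1 x)) • Real.exp (b * x ^ 2)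
      = (Real.sqrt (2 * π))⁻¹ * Real.exp (-(1/2 - b) * x ^ 2) := by
  rw [NNReal.smul_def, Real.coe_toNNReal _ (gaussianPDFReal_nonneg _ _ _)]
  simp only [gaussianPDFReal, NNReal.coe_one, mul_one]
  rw [smul_eq_mul, mul_assoc, ← Real.exp_add]
  congr 1
  ring_nf

lemma aux_integrable_smul {b : ℝ} (hb : b < 1/2) :
    Integrable (fun x => (Real.toNNReal (gaussianPDFReal 0 1 x)) • Real.exp (b * x ^ 2)) volume := by
  simp only [aux_pdf_smul]
  exact (integrable_exp_neg_mul_sq (by linarith)).const_mul _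

lemma aux_gauss_integrable {b : ℝ} (hb : b < 1/2) :
    Integrable (fun x => Real.exp (b * x ^ 2)) (gaussianReal 0 1) := by
  rw [aux_withDensity, integrable_withDensity_iff_integrable_smul
      ((measurable_gaussianPDFReal 0 1).real_toNNReal)]
  exact aux_integrable_smul hb

lemma aux_gauss_integral {b : ℝ} (hb : b < 1/2) :
    ∫ x, Real.exp (b * x ^ 2) ∂(gaussianReal 0 1) = (1 - 2*b) ^ (-(1/2) : ℝ) := by
  rw [aux_withDensity, integral_withDensity_eq_integral_smul
      ((measurable_gaussianPDFReal 0 1).real_toNNReal)]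
  simp only [aux_pdf_smul]
  rw [integral_const_mul, integral_gaussian]
  have h1 : (0:ℝ) < 1/2 - b := by linarith
  have h2 : (0:ℝ) < 1 - 2*b := by linarith
  rw [Real.rpow_neg h2.le, ← Real.sqrt_eq_rpow, ← Real.sqrt_inv, ← Real.sqrt_inv,
    ← Real.sqrt_mul (by positivity)]
  congr 1
  field_simp

lemma aux_lintegral_sq :
    ∫⁻ x, ENNReal.ofReal (x ^ 2) ∂(gaussianReal 0 1) < ⊤ := by
  have hb : ((1:ℝ)/4) < 1/2 := by norm_num
  have hint := aux_gauss_integrable hb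
  have hle : ∀ x : ℝ, ENNReal.ofReal (x ^ 2) ≤ ENNReal.ofReal (4 * Real.exp ((1/4) * x ^ 2)) := by
    intro x
    apply ENNReal.ofReal_le_ofReal
    nlinarith [Real.add_one_le_exp ((1/4) * x ^ 2), sq_nonneg x]
  calc ∫⁻ x, ENNReal.ofReal (x ^ 2) ∂(gaussianReal 0 1)
      ≤ ∫⁻ x, ENNReal.ofReal (4 * Real.exp ((1/4) * x ^ 2)) ∂(gaussianReal 0 1) :=
        lintegral_mono hle
    _ = ENNReal.ofReal (∫ x, 4 * Real.exp ((1/4) * x ^ 2) ∂(gaussianReal 0 1)) := by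
        rw [ofReal_integral_eq_lintegral_ofReal (hint.const_mul 4)
          (Filter.Eventually.of_forall fun x => by positivity)]
    _ < ⊤ := ENNReal.ofReal_lt_top

lemma aux_log_bound {δ y : ℝ} (hδ : 0 < δ) (hδ1 : δ ≤ 1) (hy : δ ≤ y) :
    |Real.log y| ≤ δ⁻¹ * |y - 1| := by
  have hy0 : 0 < y := lt_of_lt_of_le hδ hy
  have hδinv : 1 ≤ δ⁻¹ := (one_le_inv₀ hδ).mpr hδ1
  rcases le_or_gt 1 y with h | h
  · rw [abs_of_nonneg (Real.log_nonneg h), abs_of_nonneg (by linarith)]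
    have h1 : Real.log y ≤ y - 1 := Real.log_le_sub_one_of_pos hy0
    nlinarith
  · rw [abs_of_nonpos (Real.log_nonpos (by linarith) (by linarith)),
      abs_of_nonpos (by linarith)]
    have h1 : Real.log y⁻¹ ≤ y⁻¹ - 1 := Real.log_le_sub_one_of_pos (by positivity)
    rw [Real.log_inv] at h1
    have h2 : y⁻¹ ≤ δ⁻¹ := inv_anti₀ hδ hy
    have h3 : y⁻¹ - 1 = y⁻¹ * (1 - y) := by field_simp
    have h4 : y⁻¹ * (1 - y) ≤ δ⁻¹ * (1 - y) :=
      mul_le_mul_of_nonneg_right h2 (by linarith)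
    calc -Real.log y ≤ y⁻¹ - 1 := by linarith
      _ = y⁻¹ * (1 - y) := h3
      _ ≤ δ⁻¹ * (1 - y) := h4
      _ = δ⁻¹ * -(y - 1) := by ring


/-- Let `(t i)` be i.i.d. standard real Gaussian random variables, `(λ i)` absolutely
summable reals, and `c > 0` with `sup_i 2cλ_i < 1`. Then for every `u ∈ ℝ`,
`P(Σ_i λ_i t_i² > u) ≤ exp(−c u) Π_i (1 − 2cλ_i)^(−1/2)`. -/
theorem stmt_7
    {Ω : Type*} [MeasurableSpace Ω] (P : Measure Ω) [IsProbabilityMeasure P]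
    (t : ℕ → Ω → ℝ) (htmeas : ∀ i, Measurable (t i))
    (htlaw : ∀ i, P.map (t i) = gaussianReal 0 1)
    (htindep : iIndepFun t P)
    (lam : ℕ → ℝ) (hlam : Summable fun i => |lam i|)
    (c : ℝ) (hc0 : 0 < c) (hc : (⨆ i, 2 * c * lam i) < 1) :
    ∀ u : ℝ,
      P {ω | u < ∑' i, lam i * t i ω ^ 2}
        ≤ ENNReal.ofReal
            (Real.exp (-c * u) * ∏' i, (1 - 2 * c * lam i) ^ (-(1 / 2) : ℝ)) := by
  intro u
  set X : ℕ → Ω → ℝ := fun i ω => lam i * t i ω ^ 2 with hX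
  have hXmeas : ∀ i, Measurable (X i) :=
    fun i => measurable_const.mul ((htmeas i).pow_const 2)
  -- boundedness & positivity
  have hbdd : BddAbove (Set.range fun i => 2 * c * lam i) := by
    refine ⟨2 * c * ∑' i, |lam i|, ?_⟩
    rintro _ ⟨i, rfl⟩
    have h1 : lam i ≤ |lam i| := le_abs_self _
    have h2 : |lam i| ≤ ∑' j, |lam j| := Summable.le_tsum hlam i (fun j _ => abs_nonneg _)
    have h3 : (0:ℝ) ≤ 2 * c := by positivity
    exact mul_le_mul_of_nonneg_left (h1.trans h2) h3
  have hlt : ∀ i, 2 * c * lam i < 1 :=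
    fun i => lt_of_le_of_lt (le_ciSup hbdd i) hc
  have hpos : ∀ i, 0 < 1 - 2 * c * lam i := fun i => by linarith [hlt i]
  set g : ℕ → ℝ := fun i => (1 - 2 * c * lam i) ^ (-(1 / 2) : ℝ) with hg
  -- δ
  set δ : ℝ := min (1 - (⨆ i, 2 * c * lam i)) 1 with hδdef
  have hδ : 0 < δ := lt_min (by linarith) one_pos
  have hδ1 : δ ≤ 1 := min_le_right _ _
  have hδle : ∀ i, δ ≤ 1 - 2 * c * lam i := by
    intro i
    have := le_ciSup hbdd i
    calc δ ≤ 1 - (⨆ i, 2 * c * lam i) := min_le_left _ _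
      _ ≤ 1 - 2 * c * lam i := by linarith
  -- mgf of a single term
  have hmgf_i : ∀ i, mgf (X i) P c = g i := by
    intro i
    have hb : c * lam i < 1 / 2 := by linarith [hlt i]
    have h1 : mgf (X i) P c
        = ∫ x, Real.exp ((c * lam i) * x ^ 2) ∂(gaussianReal 0 1) := by
      have hfm : AEStronglyMeasurable (fun x : ℝ => Real.exp (c * lam i * x ^ 2))
          (Measure.map (t i) P) :=
        Measurable.aestronglyMeasurable (by measurability)
      rw [mgf, ← htlaw i, integral_map (htmeas i).aemeasurable hfm]
      congr 1 with ω
      simp only [hX]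
      ring_nf
    rw [h1, aux_gauss_integral hb, hg]
    congr 1
    ring
  have hint_i : ∀ i, Integrable (fun ω => Real.exp (c * X i ω)) P := by
    intro i
    have hb : c * lam i < 1 / 2 := by linarith [hlt i]
    have h1 : Integrable (fun x => Real.exp ((c * lam i) * x ^ 2)) (P.map (t i)) := by
      rw [htlaw i]; exact aux_gauss_integrable hb
    have hfm : AEStronglyMeasurable (fun x : ℝ => Real.exp (c * lam i * x ^ 2))
        (Measure.map (t i) P) :=
      Measurable.aestronglyMeasurable (by measurability)
    have h2 := (integrable_map_measure hfm (htmeas i).aemeasurable).mp h1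
    refine h2.congr (Filter.Eventually.of_forall fun ω => ?_)
    simp only [Function.comp, hX]
    ring_nf
  -- independence
  have hXindep : iIndepFun X P :=
    htindep.comp (fun i x => lam i * x ^ 2)
      (fun i => measurable_const.mul (measurable_id.pow_const 2))
  have hmgf_n : ∀ n, mgf (∑ i ∈ Finset.range n, X i) P c = ∏ i ∈ Finset.range n, g i := by
    intro n
    rw [hXindep.mgf_sum hXmeas]
    exact Finset.prod_congr rfl fun i _ => hmgf_i i
  have hint_n : ∀ n, Integrable
      (fun ω => Real.exp (c * (∑ i ∈ Finset.range n, X i) ω)) P :=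
    fun n => hXindep.integrable_exp_mul_sum hXmeas (fun i _ => hint_i i)
  -- infinite product
  set h : ℕ → ℝ := fun i => Real.log (1 - 2 * c * lam i) * (-(1 / 2)) with hh
  have hg_exp : ∀ i, g i = Real.exp (h i) := fun i => by
    show (1 - 2 * c * lam i) ^ (-(1 / 2) : ℝ)
        = Real.exp (Real.log (1 - 2 * c * lam i) * (-(1 / 2)))
    exact Real.rpow_def_of_pos (hpos i) _
  have hsum_log : Summable (fun i => Real.log (1 - 2 * c * lam i)) := by
    rw [← summable_abs_iff]
    refine Summable.of_nonneg_of_le (fun i => abs_nonneg _) (fun i => ?_)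
      (hlam.mul_left (δ⁻¹ * (2 * c)))
    calc |Real.log (1 - 2 * c * lam i)|
        ≤ δ⁻¹ * |(1 - 2 * c * lam i) - 1| := aux_log_bound hδ hδ1 (hδle i)
      _ = δ⁻¹ * (2 * c) * |lam i| := by
          rw [show (1 - 2 * c * lam i) - 1 = -(2 * c * lam i) by ring, abs_neg,
            abs_mul, abs_of_nonneg (by positivity : (0:ℝ) ≤ 2 * c)]
          ring
  have hsumh : Summable h := hsum_log.mul_right _
  have hprod : HasProd g (Real.exp (∑' i, h i)) := by
    have h2 : Tendsto (fun s : Finset ℕ => Real.exp (∑ i ∈ s, h i)) atTop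
        (nhds (Real.exp (∑' i, h i))) :=
      (Real.continuous_exp.tendsto _).comp hsumh.hasSum
    unfold HasProd
    refine h2.congr (fun s => ?_)
    rw [Real.exp_sum]
    exact Finset.prod_congr rfl fun i _ => (hg_exp i).symm
  have hPr_eq : (∏' i, g i) = Real.exp (∑' i, h i) := hprod.tprod_eq
  have hPr_nonneg : 0 ≤ ∏' i, g i := hPr_eq ▸ (Real.exp_pos _).le
  have htend_prod : Tendsto (fun n => ∏ i ∈ Finset.range n, g i) atTop
      (nhds (∏' i, g i)) := hPr_eq ▸ hprod.tendsto_prod_nat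
  -- a.s. summability
  have hae_summable : ∀ᵐ ω ∂P, Summable (fun i => X i ω) := by
    have hmeasF : ∀ i, Measurable (fun ω => ENNReal.ofReal (|lam i| * t i ω ^ 2)) :=
      fun i => (measurable_const.mul ((htmeas i).pow_const 2)).ennreal_ofReal
    have hkey : ∫⁻ ω, ∑' i, ENNReal.ofReal (|lam i| * t i ω ^ 2) ∂P < ⊤ := by
      rw [lintegral_tsum (fun i => (hmeasF i).aemeasurable)]
      have heq : ∀ i, ∫⁻ ω, ENNReal.ofReal (|lam i| * t i ω ^ 2) ∂P
          = ENNReal.ofReal |lam i| * ∫⁻ x, ENNReal.ofReal (x ^ 2) ∂(gaussianReal 0 1) := by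
        intro i
        rw [← htlaw i, lintegral_map (by fun_prop) (htmeas i)]
        rw [← lintegral_const_mul _ (by fun_prop)]
        congr 1 with ω
        rw [← ENNReal.ofReal_mul (abs_nonneg _)]
      rw [tsum_congr heq, ENNReal.tsum_mul_right,
        ← ENNReal.ofReal_tsum_of_nonneg (fun i => abs_nonneg _) hlam]
      exact ENNReal.mul_lt_top ENNReal.ofReal_lt_top aux_lintegral_sq
    have hae := ae_lt_top (Measurable.ennreal_tsum hmeasF) hkey.ne
    filter_upwards [hae] with ω hω
    have hsum := ENNReal.summable_toReal hω.ne
    have hsum' : Summable (fun i => |lam i| * t i ω ^ 2) := by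
      refine hsum.congr (fun i => ?_)
      rw [ENNReal.toReal_ofReal (by positivity)]
    rw [← summable_abs_iff]
    refine hsum'.congr (fun i => ?_)
    rw [hX, abs_mul, abs_of_nonneg (sq_nonneg (t i ω))]
  -- S and convergence
  set S : Ω → ℝ := fun ω => ∑' i, X i ω with hS
  have hae_tend : ∀ᵐ ω ∂P, Tendsto (fun n => (∑ i ∈ Finset.range n, X i) ω) atTop
      (nhds (S ω)) := by
    filter_upwards [hae_summable] with ω hω
    simpa [Finset.sum_apply] using hω.hasSum.tendsto_sum_nat
  -- Fatou
  have hSnmeas : ∀ n, Measurable (fun ω => (∑ i ∈ Finset.range n, X i) ω) := by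
    intro n
    simp only [Finset.sum_apply]
    exact Finset.measurable_sum _ (fun i _ => hXmeas i)
  have hlint : ∫⁻ ω, ENNReal.ofReal (Real.exp (c * S ω)) ∂P
      ≤ ENNReal.ofReal (∏' i, g i) := by
    calc ∫⁻ ω, ENNReal.ofReal (Real.exp (c * S ω)) ∂P
        = ∫⁻ ω, liminf (fun n => ENNReal.ofReal
            (Real.exp (c * (∑ i ∈ Finset.range n, X i) ω))) atTop ∂P := by
          refine lintegral_congr_ae ?_
          filter_upwards [hae_tend] with ω hω
          exact (((ENNReal.continuous_ofReal.tendsto _).comp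
            ((Real.continuous_exp.tendsto _).comp (hω.const_mul c))).liminf_eq).symm
      _ ≤ liminf (fun n => ∫⁻ ω, ENNReal.ofReal
            (Real.exp (c * (∑ i ∈ Finset.range n, X i) ω)) ∂P) atTop :=
          lintegral_liminf_le (fun n => ((hSnmeas n).const_mul c).exp.ennreal_ofReal)
      _ = liminf (fun n => ENNReal.ofReal (∏ i ∈ Finset.range n, g i)) atTop := by
          refine liminf_congr (Filter.Eventually.of_forall fun n => ?_)
          rw [← ofReal_integral_eq_lintegral_ofReal (hint_n n)
            (Filter.Eventually.of_forall fun ω => (Real.exp_pos _).le)]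
          rw [← hmgf_n n]
          rfl
      _ = ENNReal.ofReal (∏' i, g i) :=
          ((ENNReal.continuous_ofReal.tendsto _).comp htend_prod).liminf_eq
  -- integrability of exp(c S)
  have hSmeas : AEMeasurable S P :=
    aemeasurable_of_tendsto_metrizable_ae' (fun n => (hSnmeas n).aemeasurable) hae_tend
  have hint_S : Integrable (fun ω => Real.exp (c * S ω)) P := by
    constructor
    · exact (Real.measurable_exp.comp_aemeasurable
        (hSmeas.const_mul c)).aestronglyMeasurable
    · rw [hasFiniteIntegral_iff_ofReal
        (Filter.Eventually.of_forall fun ω => (Real.exp_pos _).le)]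
      exact lt_of_le_of_lt hlint ENNReal.ofReal_lt_top
  have hmgf_S : mgf S P c ≤ ∏' i, g i := by
    have h1 : ENNReal.ofReal (mgf S P c) ≤ ENNReal.ofReal (∏' i, g i) := by
      rw [mgf, ofReal_integral_eq_lintegral_ofReal hint_S
        (Filter.Eventually.of_forall fun ω => (Real.exp_pos _).le)]
      exact hlint
    have h2 : 0 ≤ mgf S P c := mgf_nonneg
    rwa [ENNReal.ofReal_le_ofReal_iff hPr_nonneg] at h1
  -- Chernoff
  have hch := measure_ge_le_exp_mul_mgf (X := S) (μ := P) u hc0.le hint_S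
  have hfinal : (P {ω | u ≤ S ω}).toReal ≤ Real.exp (-c * u) * ∏' i, g i := by
    refine le_trans hch ?_
    exact mul_le_mul_of_nonneg_left hmgf_S (Real.exp_nonneg _)
  calc P {ω | u < S ω} ≤ P {ω | u ≤ S ω} :=
      measure_mono (Set.setOf_subset_setOf.mpr (fun ω => le_of_lt))
    _ ≤ ENNReal.ofReal (Real.exp (-c * u) * ∏' i, g i) := by
        rw [← ENNReal.ofReal_toReal (measure_ne_top P _)]
        exact ENNReal.ofReal_le_ofReal hfinal
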